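/- Let W be a process on parties A', B', C', ... and Z a process on parties A'', B'', C'', ..., and form the combined parties A = A'A'' (with input a₁ = a₁'a₁'' and output a₂ = a₂'a₂''), B = B'B'', etc. The tensor product P = W ⊗ Z, regarded as an operator for the combined parties, is NOT a valid process if and only if there exist a nonzero nontrivial Hilbert–Schmidt term of W and a nonzero nontrivial Hilbert–Schmidt term of Z such that: (1) on every combined party where one of the two terms is trivial, the other term is either trivial or includes the out type; and (2) on every combined party where one of the two terms is the in type, the other term includes the out type. -/

import Mathlib

open Matrix Kronecker BigOperators
open scoped ComplexOrder

namespace ProcessPaper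

/-- A (generalized) Hilbert–Schmidt basis of operators on a finite-dimensional Hilbert
space with orthonormal basis indexed by `n`: a family of Hermitian matrices indexed by
`ι` (with `Fintype.card ι = (Fintype.card n) ^ 2`), whose distinguished element `σ 0`
is the identity, whose other elements are traceless, which are mutually orthogonal
under the trace inner product, and which are all nonzero. -/
def IsHSBasis {n : Type*} [Fintype n] [DecidableEq n] {ι : Type*} [Fintype ι] [Zero ι]
    (σ : ι → Matrix n n ℂ) : Prop :=
  Fintype.card ι = (Fintype.card n) ^ 2 ∧
  (∀ i, (σ i).IsHermitian) ∧
  σ 0 = 1 ∧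
  (∀ i, i ≠ 0 → (σ i).trace = 0) ∧
  (∀ i j, i ≠ j → (σ i * σ j).trace = 0) ∧
  (∀ i, σ i ≠ 0)

variable {P : Type*} [Fintype P] [DecidableEq P]

section defs

variable {I O : P → Type*} [∀ p, Fintype (I p)] [∀ p, DecidableEq (I p)]
  [∀ p, Fintype (O p)] [∀ p, DecidableEq (O p)]
  {ιI ιO : P → Type*} [∀ p, Fintype (ιI p)] [∀ p, Zero (ιI p)]
  [∀ p, Fintype (ιO p)] [∀ p, Zero (ιO p)]

/-- The tensor product, over all parties, of party-local operators
(each party `p` carries the Hilbert space of its input system `I p`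
tensored with its output system `O p`). -/
def tensorFamily (M : ∀ p, Matrix (I p × O p) (I p × O p) ℂ) :
    Matrix ((p : P) → I p × O p) ((p : P) → I p × O p) ℂ :=
  fun x y => ∏ p, M p (x p) (y p)

/-- The Hilbert–Schmidt basis term with multi-index `t`:
`⨂_p σI p (t p).1 ⊗ σO p (t p).2`. -/
def hsTerm (σI : ∀ p, ιI p → Matrix (I p) (I p) ℂ)
    (σO : ∀ p, ιO p → Matrix (O p) (O p) ℂ)
    (t : ∀ p, ιI p × ιO p) :
    Matrix ((p : P) → I p × O p) ((p : P) → I p × O p) ℂ :=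
  fun x y => ∏ p, σI p (t p).1 (x p).1 (y p).1 * σO p (t p).2 (x p).2 (y p).2

/-- The operator with Hilbert–Schmidt coefficients `w`. -/
noncomputable def expand (σI : ∀ p, ιI p → Matrix (I p) (I p) ℂ)
    (σO : ∀ p, ιO p → Matrix (O p) (O p) ℂ)
    (w : (∀ p, ιI p × ιO p) → ℝ) :
    Matrix ((p : P) → I p × O p) ((p : P) → I p × O p) ℂ :=
  ∑ t : ∀ p, ιI p × ιO p, (w t : ℂ) • hsTerm σI σO t

end defs

section types

variable {ιI ιO : P → Type*} [∀ p, Zero (ιI p)] [∀ p, Zero (ιO p)]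

/-- A term is trivial on party `p` if its indices on both the input and the output
system of `p` are zero (identity factor on party `p`). -/
def TrivialAt (t : ∀ p, ιI p × ιO p) (p : P) : Prop :=
  (t p).1 = 0 ∧ (t p).2 = 0

/-- A term is in type on party `p` if it is nontrivial on the input system of `p`
and trivial (identity) on the output system of `p`. -/
def InTypeAt (t : ∀ p, ιI p × ιO p) (p : P) : Prop :=
  (t p).1 ≠ 0 ∧ (t p).2 = 0

/-- A term includes the out type on party `p` if it is nontrivial on the output
system of `p`. -/
def IncludesOutAt (t : ∀ p, ιI p × ιO p) (p : P) : Prop :=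
  (t p).2 ≠ 0

/-- A term is nontrivial if it is nontrivial on some party
(i.e. it is not the identity term). -/
def NontrivialTerm (t : ∀ p, ιI p × ιO p) : Prop :=
  ∃ p, ¬ TrivialAt t p

/-- The Oreshkov–Giarmatzi condition on Hilbert–Schmidt coefficients: every nonzero
nontrivial term is in type on at least one party. -/
def OGCoeffs (w : (∀ p, ιI p × ιO p) → ℝ) : Prop :=
  ∀ t, w t ≠ 0 → NontrivialTerm t → ∃ p, InTypeAt t p

end types

section process

variable {I O : P → Type*} [∀ p, Fintype (I p)] [∀ p, DecidableEq (I p)]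
  [∀ p, Fintype (O p)] [∀ p, DecidableEq (O p)]
  {ιI ιO : P → Type*} [∀ p, Fintype (ιI p)] [∀ p, Zero (ιI p)]
  [∀ p, Fintype (ιO p)] [∀ p, Zero (ιO p)]

/-- `W` is a valid process with Hilbert–Schmidt coefficients `w` (relative to the
Hilbert–Schmidt bases `σI`, `σO`): it is positive semidefinite, has trace equal to the
product `d_O` of the output dimensions, has expansion given by `w`, and every nonzero
nontrivial Hilbert–Schmidt term of it is in type on at least one party. -/
def IsProcessWith (σI : ∀ p, ιI p → Matrix (I p) (I p) ℂ)
    (σO : ∀ p, ιO p → Matrix (O p) (O p) ℂ)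
    (W : Matrix ((p : P) → I p × O p) ((p : P) → I p × O p) ℂ)
    (w : (∀ p, ιI p × ιO p) → ℝ) : Prop :=
  W.PosSemidef ∧
  W.trace = ∏ p, (Fintype.card (O p) : ℂ) ∧
  W = expand σI σO w ∧
  OGCoeffs w

/-- `W` is a valid process (relative to the Hilbert–Schmidt bases `σI`, `σO`). -/
def IsProcess (σI : ∀ p, ιI p → Matrix (I p) (I p) ℂ)
    (σO : ∀ p, ιO p → Matrix (O p) (O p) ℂ)
    (W : Matrix ((p : P) → I p × O p) ((p : P) → I p × O p) ℂ) : Prop :=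
  ∃ w, IsProcessWith σI σO W w

end process

section product

variable {I' O' I'' O'' : P → Type*}

/-- The tensor product `P = W ⊗ Z` of an operator `W` for parties `A', B', …` and an
operator `Z` for parties `A'', B'', …`, regarded as an operator for the combined
parties `A = A'A''` (input `a₁ = a₁'a₁''`, output `a₂ = a₂'a₂''`), `B = B'B''`, …. -/
def prodOp (W : Matrix ((p : P) → I' p × O' p) ((p : P) → I' p × O' p) ℂ)
    (Z : Matrix ((p : P) → I'' p × O'' p) ((p : P) → I'' p × O'' p) ℂ) :
    Matrix ((p : P) → (I' p × I'' p) × (O' p × O'' p))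
      ((p : P) → (I' p × I'' p) × (O' p × O'' p)) ℂ :=
  fun x y =>
    W (fun p => ((x p).1.1, (x p).2.1)) (fun p => ((y p).1.1, (y p).2.1)) *
    Z (fun p => ((x p).1.2, (x p).2.2)) (fun p => ((y p).1.2, (y p).2.2))

end product

/-- The Hilbert–Schmidt basis of a combined system, consisting of the tensor (Kronecker)
products of the basis elements of the two subsystems; its distinguished (identity)
element is the product of the two distinguished elements. -/
def prodBasis {n n' ι ι' : Type*} (σ : ι → Matrix n n ℂ) (σ' : ι' → Matrix n' n' ℂ) :
    ι × ι' → Matrix (n × n') (n × n') ℂ :=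
  fun i => σ i.1 ⊗ₖ σ' i.2

section coeffs

variable {ιI' ιO' ιI'' ιO'' : P → Type*}

/-- The Hilbert–Schmidt coefficients of a tensor product `W ⊗ Z` in terms of the
coefficients `w` of `W` and `z` of `Z`. -/
def prodCoeffs (w : (∀ p, ιI' p × ιO' p) → ℝ) (z : (∀ p, ιI'' p × ιO'' p) → ℝ) :
    (∀ p, (ιI' p × ιI'' p) × (ιO' p × ιO'' p)) → ℝ :=
  fun u => w (fun p => ((u p).1.1, (u p).2.1)) * z (fun p => ((u p).1.2, (u p).2.2))

/-- The multi-index of the tensor product of the term `t` of `W` and the term `s`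
of `Z`, as a term for the combined parties. -/
def combineTerm (t : ∀ p, ιI' p × ιO' p) (s : ∀ p, ιI'' p × ιO'' p) :
    ∀ p, (ιI' p × ιI'' p) × (ιO' p × ιO'' p) :=
  fun p => (((t p).1, (s p).1), ((t p).2, (s p).2))

end coeffs

section twoparty

variable {ιI ιO : Fin 2 → Type*} [∀ p, Zero (ιI p)] [∀ p, Zero (ιO p)]

/-- For two parties `A` (party `0`) and `B` (party `1`), an `A` to `B` signalling
term: a term of type `a₂b₁` or `a₁a₂b₁`, i.e. nontrivial on `a₂` and on `b₁` and
trivial on `b₂`. -/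
def AtoBSig (t : ∀ p, ιI p × ιO p) : Prop :=
  (t 0).2 ≠ 0 ∧ (t 1).1 ≠ 0 ∧ (t 1).2 = 0

/-- A `B` to `A` signalling term: a term of type `a₁b₂` or `a₁b₁b₂`, i.e. nontrivial
on `b₂` and on `a₁` and trivial on `a₂`. -/
def BtoASig (t : ∀ p, ιI p × ιO p) : Prop :=
  (t 1).2 ≠ 0 ∧ (t 0).1 ≠ 0 ∧ (t 0).2 = 0

end twoparty



section AuxGeneral

lemma kronecker_conjTranspose {m n : Type*} (A : Matrix m m ℂ) (B : Matrix n n ℂ) :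
    (A ⊗ₖ B)ᴴ = Aᴴ ⊗ₖ Bᴴ := by
  ext i j
  simp only [Matrix.conjTranspose_apply, Matrix.kroneckerMap_apply, star_mul']

lemma posSemidef_kronecker {m n : Type*} [Fintype m] [DecidableEq m] [Fintype n] [DecidableEq n]
    {A : Matrix m m ℂ} {B : Matrix n n ℂ} (hA : A.PosSemidef) (hB : B.PosSemidef) :
    (A ⊗ₖ B).PosSemidef := by
  obtain ⟨A', rfl⟩ : ∃ A' : Matrix _ _ ℂ, A = A'ᴴ * A' := by
    open scoped MatrixOrder in exact CStarAlgebra.nonneg_iff_eq_star_mul_self.mp hA.nonneg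
  obtain ⟨B', rfl⟩ : ∃ B' : Matrix _ _ ℂ, B = B'ᴴ * B' := by
    open scoped MatrixOrder in exact CStarAlgebra.nonneg_iff_eq_star_mul_self.mp hB.nonneg
  rw [Matrix.mul_kronecker_mul, ← kronecker_conjTranspose]
  exact Matrix.posSemidef_conjTranspose_mul_self _

lemma trace_mul_self_ne_zero {n : Type*} [Fintype n] [DecidableEq n]
    {A : Matrix n n ℂ} (hA : A.IsHermitian) (h : A ≠ 0) : (A * A).trace ≠ 0 := by
  have key : (A * A).trace = ((∑ a, ∑ b, Complex.normSq (A a b) : ℝ) : ℂ) := by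
    simp only [Matrix.trace, Matrix.diag, Matrix.mul_apply]
    push_cast
    refine Finset.sum_congr rfl fun a _ => Finset.sum_congr rfl fun b _ => ?_
    have hba : A b a = (starRingEnd ℂ) (A a b) := by
      simp [← hA.apply a b]
    rw [hba, Complex.mul_conj]
  rw [key, Complex.ofReal_ne_zero]
  obtain ⟨a, b, hab⟩ : ∃ a b, A a b ≠ 0 := by
    by_contra hc
    push_neg at hc
    exact h (by ext a b; exact hc a b)
  have hpos : 0 < ∑ a, ∑ b, Complex.normSq (A a b) := by
    refine Finset.sum_pos' (fun a _ => Finset.sum_nonneg fun b _ => Complex.normSq_nonneg _) ?_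
    exact ⟨a, Finset.mem_univ a, Finset.sum_pos' (fun b _ => Complex.normSq_nonneg _)
      ⟨b, Finset.mem_univ b, Complex.normSq_pos.mpr hab⟩⟩
  exact ne_of_gt hpos

lemma prodBasis_trace_mul {n n' ι ι' : Type*} [Fintype n] [Fintype n']
    (σ : ι → Matrix n n ℂ) (σ' : ι' → Matrix n' n' ℂ) (i j : ι × ι') :
    (prodBasis σ σ' i * prodBasis σ σ' j).trace
      = (σ i.1 * σ j.1).trace * (σ' i.2 * σ' j.2).trace := by
  rw [prodBasis, prodBasis, ← Matrix.mul_kronecker_mul, Matrix.trace_kronecker]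

end AuxGeneral

section AuxTF

variable {P : Type*} [Fintype P] [DecidableEq P]
  {I O : P → Type*} [∀ p, Fintype (I p)] [∀ p, DecidableEq (I p)]
  [∀ p, Fintype (O p)] [∀ p, DecidableEq (O p)]
  {ιI ιO : P → Type*} [∀ p, Fintype (ιI p)] [∀ p, Zero (ιI p)]
  [∀ p, Fintype (ιO p)] [∀ p, Zero (ιO p)]

lemma tensorFamily_mul (M N : ∀ p, Matrix (I p × O p) (I p × O p) ℂ) :
    tensorFamily M * tensorFamily N = tensorFamily fun p => M p * N p := by
  ext x y
  simp only [tensorFamily, Matrix.mul_apply]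
  rw [Finset.prod_univ_sum, Fintype.piFinset_univ]
  exact Finset.sum_congr rfl fun z _ => (Finset.prod_mul_distrib).symm

lemma trace_tensorFamily (M : ∀ p, Matrix (I p × O p) (I p × O p) ℂ) :
    (tensorFamily M).trace = ∏ p, (M p).trace := by
  simp only [Matrix.trace, Matrix.diag, tensorFamily]
  rw [Finset.prod_univ_sum, Fintype.piFinset_univ]

lemma hsTerm_eq_tensorFamily (σI : ∀ p, ιI p → Matrix (I p) (I p) ℂ)
    (σO : ∀ p, ιO p → Matrix (O p) (O p) ℂ) (t : ∀ p, ιI p × ιO p) :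
    hsTerm σI σO t = tensorFamily fun p => σI p (t p).1 ⊗ₖ σO p (t p).2 := rfl

lemma trace_hsTerm_mul (σI : ∀ p, ιI p → Matrix (I p) (I p) ℂ)
    (σO : ∀ p, ιO p → Matrix (O p) (O p) ℂ) (t s : ∀ p, ιI p × ιO p) :
    (hsTerm σI σO t * hsTerm σI σO s).trace
      = ∏ p, (σI p (t p).1 * σI p (s p).1).trace * (σO p (t p).2 * σO p (s p).2).trace := by
  rw [hsTerm_eq_tensorFamily, hsTerm_eq_tensorFamily, tensorFamily_mul, trace_tensorFamily]
  refine Finset.prod_congr rfl fun p _ => ?_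
  rw [← Matrix.mul_kronecker_mul, Matrix.trace_kronecker]

lemma expand_coeff_unique
    (σI : ∀ p, ιI p → Matrix (I p) (I p) ℂ) (σO : ∀ p, ιO p → Matrix (O p) (O p) ℂ)
    (hIorth : ∀ p (i j : ιI p), i ≠ j → (σI p i * σI p j).trace = 0)
    (hIself : ∀ p (i : ιI p), (σI p i * σI p i).trace ≠ 0)
    (hOorth : ∀ p (i j : ιO p), i ≠ j → (σO p i * σO p j).trace = 0)
    (hOself : ∀ p (i : ιO p), (σO p i * σO p i).trace ≠ 0)
    {w w' : (∀ p, ιI p × ιO p) → ℝ} (h : expand σI σO w = expand σI σO w') : w = w' := by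
  have key : ∀ (v : (∀ p, ιI p × ιO p) → ℝ) (s : ∀ p, ιI p × ιO p),
      (expand σI σO v * hsTerm σI σO s).trace
        = (v s : ℂ) * ∏ p, (σI p (s p).1 * σI p (s p).1).trace
            * (σO p (s p).2 * σO p (s p).2).trace := by
    intro v s
    rw [expand, Finset.sum_mul, Matrix.trace_sum]
    rw [Finset.sum_eq_single s]
    · rw [Matrix.smul_mul, Matrix.trace_smul, trace_hsTerm_mul, smul_eq_mul]
    · intro t _ hts
      rw [Matrix.smul_mul, Matrix.trace_smul, trace_hsTerm_mul]
      obtain ⟨p, hp⟩ := Function.ne_iff.mp hts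
      have hz : (σI p (t p).1 * σI p (s p).1).trace
          * (σO p (t p).2 * σO p (s p).2).trace = 0 := by
        by_cases h1 : (t p).1 = (s p).1
        · have h2 : (t p).2 ≠ (s p).2 := fun h2 => hp (Prod.ext h1 h2)
          rw [hOorth p _ _ h2, mul_zero]
        · rw [hIorth p _ _ h1, zero_mul]
      rw [Finset.prod_eq_zero (Finset.mem_univ p) hz, smul_zero]
    · intro hs
      exact absurd (Finset.mem_univ s) hs
  funext s
  have h1 := key w s
  rw [h, key w' s] at h1
  have hC : (∏ p, (σI p (s p).1 * σI p (s p).1).trace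
      * (σO p (s p).2 * σO p (s p).2).trace) ≠ 0 :=
    Finset.prod_ne_zero_iff.mpr fun p _ => mul_ne_zero (hIself p _) (hOself p _)
  exact_mod_cast (mul_right_cancel₀ hC h1).symm

end AuxTF

section AuxProd

variable {P : Type*} [Fintype P] [DecidableEq P]

/-- Splitting equivalence for combined-party index families. -/
def splitEquiv (α β γ δ : P → Type*) :
    ((p : P) → (α p × β p) × (γ p × δ p)) ≃ ((∀ p, α p × γ p) × (∀ p, β p × δ p)) where
  toFun u := (fun p => ((u p).1.1, (u p).2.1), fun p => ((u p).1.2, (u p).2.2))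
  invFun v := fun p => (((v.1 p).1, (v.2 p).1), ((v.1 p).2, (v.2 p).2))
  left_inv u := rfl
  right_inv v := rfl

variable {I' O' I'' O'' : P → Type*}
  [∀ p, Fintype (I' p)] [∀ p, DecidableEq (I' p)]
  [∀ p, Fintype (O' p)] [∀ p, DecidableEq (O' p)]
  [∀ p, Fintype (I'' p)] [∀ p, DecidableEq (I'' p)]
  [∀ p, Fintype (O'' p)] [∀ p, DecidableEq (O'' p)]

lemma prodOp_eq_submatrix (W : Matrix ((p : P) → I' p × O' p) ((p : P) → I' p × O' p) ℂ)
    (Z : Matrix ((p : P) → I'' p × O'' p) ((p : P) → I'' p × O'' p) ℂ) :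
    prodOp W Z = (W ⊗ₖ Z).submatrix (splitEquiv I' I'' O' O'') (splitEquiv I' I'' O' O'') :=
  rfl

lemma posSemidef_prodOp {W : Matrix ((p : P) → I' p × O' p) ((p : P) → I' p × O' p) ℂ}
    {Z : Matrix ((p : P) → I'' p × O'' p) ((p : P) → I'' p × O'' p) ℂ}
    (hW : W.PosSemidef) (hZ : Z.PosSemidef) : (prodOp W Z).PosSemidef := by
  rw [prodOp_eq_submatrix]
  exact (posSemidef_kronecker hW hZ).submatrix _

lemma trace_prodOp (W : Matrix ((p : P) → I' p × O' p) ((p : P) → I' p × O' p) ℂ)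
    (Z : Matrix ((p : P) → I'' p × O'' p) ((p : P) → I'' p × O'' p) ℂ) :
    (prodOp W Z).trace = W.trace * Z.trace := by
  rw [prodOp_eq_submatrix, ← Matrix.trace_kronecker W Z]
  exact Equiv.sum_comp (splitEquiv I' I'' O' O'') fun v => (W ⊗ₖ Z) v v

variable {ιI' ιO' ιI'' ιO'' : P → Type*}
  [∀ p, Fintype (ιI' p)] [∀ p, Zero (ιI' p)]
  [∀ p, Fintype (ιO' p)] [∀ p, Zero (ιO' p)]
  [∀ p, Fintype (ιI'' p)] [∀ p, Zero (ιI'' p)]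
  [∀ p, Fintype (ιO'' p)] [∀ p, Zero (ιO'' p)]

lemma prodOp_expand (σI' : ∀ p, ιI' p → Matrix (I' p) (I' p) ℂ)
    (σO' : ∀ p, ιO' p → Matrix (O' p) (O' p) ℂ)
    (σI'' : ∀ p, ιI'' p → Matrix (I'' p) (I'' p) ℂ)
    (σO'' : ∀ p, ιO'' p → Matrix (O'' p) (O'' p) ℂ)
    (w : (∀ p, ιI' p × ιO' p) → ℝ) (z : (∀ p, ιI'' p × ιO'' p) → ℝ) :
    prodOp (expand σI' σO' w) (expand σI'' σO'' z)
      = expand (fun p => prodBasis (σI' p) (σI'' p)) (fun p => prodBasis (σO' p) (σO'' p))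
          (prodCoeffs w z) := by
  ext x y
  simp only [prodOp, expand, Matrix.sum_apply, Matrix.smul_apply, smul_eq_mul]
  rw [Finset.sum_mul_sum]
  rw [← Equiv.sum_comp (splitEquiv ιI' ιI'' ιO' ιO'').symm
    (fun u => (prodCoeffs w z u : ℂ)
      * hsTerm (fun p => prodBasis (σI' p) (σI'' p)) (fun p => prodBasis (σO' p) (σO'' p)) u x y)]
  rw [Fintype.sum_prod_type]
  refine Finset.sum_congr rfl fun t _ => Finset.sum_congr rfl fun s _ => ?_
  simp only [splitEquiv, Equiv.coe_fn_symm_mk, prodCoeffs, combineTerm, hsTerm, prodBasis,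
    Matrix.kroneckerMap_apply]
  push_cast
  rw [show (∏ p, σI' p (t p).1 ((x p).1.1) ((y p).1.1) * σI'' p (s p).1 ((x p).1.2) ((y p).1.2)
        * (σO' p (t p).2 ((x p).2.1) ((y p).2.1) * σO'' p (s p).2 ((x p).2.2) ((y p).2.2)))
      = (∏ p, σI' p (t p).1 ((x p).1.1) ((y p).1.1) * σO' p (t p).2 ((x p).2.1) ((y p).2.1))
        * ∏ p, σI'' p (s p).1 ((x p).1.2) ((y p).1.2) * σO'' p (s p).2 ((x p).2.2) ((y p).2.2)
      from by rw [← Finset.prod_mul_distrib]; exact Finset.prod_congr rfl fun p _ => by ring]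
  ring

end AuxProd

section Statement1

variable {P : Type*} [Fintype P] [DecidableEq P]
  {I' O' I'' O'' : P → Type*}
  [∀ p, Fintype (I' p)] [∀ p, DecidableEq (I' p)]
  [∀ p, Fintype (O' p)] [∀ p, DecidableEq (O' p)]
  [∀ p, Fintype (I'' p)] [∀ p, DecidableEq (I'' p)]
  [∀ p, Fintype (O'' p)] [∀ p, DecidableEq (O'' p)]
  {ιI' ιO' ιI'' ιO'' : P → Type*}
  [∀ p, Fintype (ιI' p)] [∀ p, Zero (ιI' p)]
  [∀ p, Fintype (ιO' p)] [∀ p, Zero (ιO' p)]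
  [∀ p, Fintype (ιI'' p)] [∀ p, Zero (ιI'' p)]
  [∀ p, Fintype (ιO'' p)] [∀ p, Zero (ιO'' p)]

/-- **Proposition 2.** Let `W` be a process on parties `A', B', …` and `Z` a process on
parties `A'', B'', …` (with Hilbert–Schmidt coefficients `w` and `z` respectively), and
form the combined parties `A = A'A''` (input `a₁ = a₁'a₁''`, output `a₂ = a₂'a₂''`),
`B = B'B''`, …. The tensor product `P = W ⊗ Z`, regarded as an operator for the
combined parties, is NOT a valid process if and only if there exist a nonzero
nontrivial Hilbert–Schmidt term of `W` and a nonzero nontrivial Hilbert–Schmidt term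
of `Z` such that: (1) on every combined party where one of the two terms is trivial,
the other term is either trivial or includes the out type; and (2) on every combined
party where one of the two terms is the in type, the other term includes the out
type. -/
theorem statement1
    (σI' : ∀ p, ιI' p → Matrix (I' p) (I' p) ℂ)
    (σO' : ∀ p, ιO' p → Matrix (O' p) (O' p) ℂ)
    (σI'' : ∀ p, ιI'' p → Matrix (I'' p) (I'' p) ℂ)
    (σO'' : ∀ p, ιO'' p → Matrix (O'' p) (O'' p) ℂ)
    (hσI' : ∀ p, IsHSBasis (σI' p)) (hσO' : ∀ p, IsHSBasis (σO' p))
    (hσI'' : ∀ p, IsHSBasis (σI'' p)) (hσO'' : ∀ p, IsHSBasis (σO'' p))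
    (W : Matrix ((p : P) → I' p × O' p) ((p : P) → I' p × O' p) ℂ)
    (Z : Matrix ((p : P) → I'' p × O'' p) ((p : P) → I'' p × O'' p) ℂ)
    (w : (∀ p, ιI' p × ιO' p) → ℝ) (z : (∀ p, ιI'' p × ιO'' p) → ℝ)
    (hW : IsProcessWith σI' σO' W w) (hZ : IsProcessWith σI'' σO'' Z z) :
    ¬ IsProcess (fun p => prodBasis (σI' p) (σI'' p))
        (fun p => prodBasis (σO' p) (σO'' p)) (prodOp W Z)
      ↔ ∃ t s, w t ≠ 0 ∧ z s ≠ 0 ∧ NontrivialTerm t ∧ NontrivialTerm s ∧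
          (∀ p, (TrivialAt t p → TrivialAt s p ∨ IncludesOutAt s p) ∧
                (TrivialAt s p → TrivialAt t p ∨ IncludesOutAt t p)) ∧
          (∀ p, (InTypeAt t p → IncludesOutAt s p) ∧
                (InTypeAt s p → IncludesOutAt t p))    := by
  classical
  obtain ⟨hWpsd, hWtr, hWexp, hWog⟩ := hW
  obtain ⟨hZpsd, hZtr, hZexp, hZog⟩ := hZ
  have hIorth : ∀ p (i j : ιI' p × ιI'' p), i ≠ j →
      (prodBasis (σI' p) (σI'' p) i * prodBasis (σI' p) (σI'' p) j).trace = 0 := by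
    intro p i j hij
    rw [prodBasis_trace_mul]
    by_cases h1 : i.1 = j.1
    · have h2 : i.2 ≠ j.2 := fun h2 => hij (Prod.ext h1 h2)
      rw [(hσI'' p).2.2.2.2.1 _ _ h2, mul_zero]
    · rw [(hσI' p).2.2.2.2.1 _ _ h1, zero_mul]
  have hOorth : ∀ p (i j : ιO' p × ιO'' p), i ≠ j →
      (prodBasis (σO' p) (σO'' p) i * prodBasis (σO' p) (σO'' p) j).trace = 0 := by
    intro p i j hij
    rw [prodBasis_trace_mul]
    by_cases h1 : i.1 = j.1
    · have h2 : i.2 ≠ j.2 := fun h2 => hij (Prod.ext h1 h2)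
      rw [(hσO'' p).2.2.2.2.1 _ _ h2, mul_zero]
    · rw [(hσO' p).2.2.2.2.1 _ _ h1, zero_mul]
  have hIself : ∀ p (i : ιI' p × ιI'' p),
      (prodBasis (σI' p) (σI'' p) i * prodBasis (σI' p) (σI'' p) i).trace ≠ 0 := by
    intro p i
    rw [prodBasis_trace_mul]
    exact mul_ne_zero (trace_mul_self_ne_zero ((hσI' p).2.1 _) ((hσI' p).2.2.2.2.2 _))
      (trace_mul_self_ne_zero ((hσI'' p).2.1 _) ((hσI'' p).2.2.2.2.2 _))
  have hOself : ∀ p (i : ιO' p × ιO'' p),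
      (prodBasis (σO' p) (σO'' p) i * prodBasis (σO' p) (σO'' p) i).trace ≠ 0 := by
    intro p i
    rw [prodBasis_trace_mul]
    exact mul_ne_zero (trace_mul_self_ne_zero ((hσO' p).2.1 _) ((hσO' p).2.2.2.2.2 _))
      (trace_mul_self_ne_zero ((hσO'' p).2.1 _) ((hσO'' p).2.2.2.2.2 _))
  have hexp : prodOp W Z = expand (fun p => prodBasis (σI' p) (σI'' p))
      (fun p => prodBasis (σO' p) (σO'' p)) (prodCoeffs w z) := by
    rw [hWexp, hZexp]; exact prodOp_expand _ _ _ _ _ _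
  have hiff : IsProcess (fun p => prodBasis (σI' p) (σI'' p))
      (fun p => prodBasis (σO' p) (σO'' p)) (prodOp W Z) ↔ OGCoeffs (prodCoeffs w z) := by
    constructor
    · rintro ⟨u, _, _, hueq, huog⟩
      have hu : u = prodCoeffs w z :=
        expand_coeff_unique _ _ hIorth hIself hOorth hOself (hueq.symm.trans hexp)
      exact hu ▸ huog
    · intro hog
      refine ⟨prodCoeffs w z, posSemidef_prodOp hWpsd hZpsd, ?_, hexp, hog⟩
      rw [trace_prodOp, hWtr, hZtr, ← Finset.prod_mul_distrib]
      refine Finset.prod_congr rfl fun p _ => ?_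
      simp [Fintype.card_prod]
  rw [hiff]
  constructor
  · intro hnog
    rw [OGCoeffs] at hnog
    push_neg at hnog
    obtain ⟨u, hu0, hunt, hnoin⟩ := hnog
    set t : ∀ p, ιI' p × ιO' p := fun p => ((u p).1.1, (u p).2.1) with htdef
    set s : ∀ p, ιI'' p × ιO'' p := fun p => ((u p).1.2, (u p).2.2) with hsdef
    have hu0' : w t * z s ≠ 0 := hu0
    have hw0 : w t ≠ 0 := left_ne_zero_of_mul hu0'
    have hz0 : z s ≠ 0 := right_ne_zero_of_mul hu0'
    have key : ∀ p, ((t p).1 = 0 ∧ (s p).1 = 0) ∨ (t p).2 ≠ 0 ∨ (s p).2 ≠ 0 := by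
      intro p
      by_cases h2t : (t p).2 = 0
      · by_cases h2s : (s p).2 = 0
        · left
          have h2 : (u p).2 = 0 := by
            show ((t p).2, (s p).2) = 0
            rw [h2t, h2s]; rfl
          have h1 : ¬ (u p).1 ≠ 0 := fun h => hnoin p ⟨h, h2⟩
          push_neg at h1
          have h1' : ((t p).1, (s p).1) = (0 : ιI' p × ιI'' p) := h1
          exact ⟨congrArg Prod.fst h1', congrArg Prod.snd h1'⟩
        · right; right; exact h2s
      · right; left; exact h2t
    have htriv : ∀ p, TrivialAt u p ↔ (TrivialAt t p ∧ TrivialAt s p) := by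
      intro p
      constructor
      · rintro ⟨h1, h2⟩
        have e1 : ((t p).1, (s p).1) = (0 : ιI' p × ιI'' p) := h1
        have e2 : ((t p).2, (s p).2) = (0 : ιO' p × ιO'' p) := h2
        exact ⟨⟨congrArg Prod.fst e1, congrArg Prod.fst e2⟩,
          ⟨congrArg Prod.snd e1, congrArg Prod.snd e2⟩⟩
      · rintro ⟨⟨a1, a2⟩, ⟨b1, b2⟩⟩
        constructor
        · show ((t p).1, (s p).1) = 0
          rw [a1, b1]; rfl
        · show ((t p).2, (s p).2) = 0
          rw [a2, b2]; rfl
    have hnt_t : NontrivialTerm t := by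
      by_contra hnt
      rw [NontrivialTerm] at hnt
      push_neg at hnt
      have hsnt : NontrivialTerm s := by
        obtain ⟨p, hp⟩ := hunt
        exact ⟨p, fun hps => hp ((htriv p).mpr ⟨hnt p, hps⟩)⟩
      obtain ⟨p, hip⟩ := hZog s hz0 hsnt
      rcases key p with ⟨h1, h2⟩ | h | h
      · exact hip.1 h2
      · exact h (hnt p).2
      · exact h hip.2
    have hnt_s : NontrivialTerm s := by
      by_contra hnt
      rw [NontrivialTerm] at hnt
      push_neg at hnt
      have htnt : NontrivialTerm t := by
        obtain ⟨p, hp⟩ := hunt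
        exact ⟨p, fun hps => hp ((htriv p).mpr ⟨hps, hnt p⟩)⟩
      obtain ⟨p, hip⟩ := hWog t hw0 htnt
      rcases key p with ⟨h1, h2⟩ | h | h
      · exact hip.1 h1
      · exact h hip.2
      · exact h (hnt p).2
    refine ⟨t, s, hw0, hz0, hnt_t, hnt_s, fun p => ⟨?_, ?_⟩, fun p => ⟨?_, ?_⟩⟩
    · rintro ⟨a1, a2⟩
      by_cases h2s : (s p).2 = 0
      · left
        refine ⟨?_, h2s⟩
        rcases key p with ⟨_, h1⟩ | h | h
        · exact h1
        · exact absurd a2 h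
        · exact absurd h2s h
      · right; exact h2s
    · rintro ⟨b1, b2⟩
      by_cases h2t : (t p).2 = 0
      · left
        refine ⟨?_, h2t⟩
        rcases key p with ⟨h1, _⟩ | h | h
        · exact h1
        · exact absurd h2t h
        · exact absurd b2 h
      · right; exact h2t
    · rintro ⟨a1, a2⟩
      rcases key p with ⟨h1, _⟩ | h | h
      · exact absurd h1 a1
      · exact absurd a2 h
      · exact h
    · rintro ⟨b1, b2⟩
      rcases key p with ⟨_, h1⟩ | h | h
      · exact absurd h1 b1
      · exact h
      · exact absurd b2 h
  · rintro ⟨t, s, hw0, hz0, hnt_t, hnt_s, hcond1, hcond2⟩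
    intro hog
    have hu0 : prodCoeffs w z (combineTerm t s) ≠ 0 := mul_ne_zero hw0 hz0
    have hunt : NontrivialTerm (combineTerm t s) := by
      obtain ⟨p, hp⟩ := hnt_t
      refine ⟨p, fun htp => hp ?_⟩
      obtain ⟨h1, h2⟩ := htp
      exact ⟨congrArg Prod.fst h1, congrArg Prod.fst h2⟩
    obtain ⟨p, h1, h2⟩ := hog (combineTerm t s) hu0 hunt
    have ht2 : (t p).2 = 0 := congrArg Prod.fst h2
    have hs2 : (s p).2 = 0 := congrArg Prod.snd h2
    by_cases h1t : (t p).1 = 0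
    · by_cases h1s : (s p).1 = 0
      · exact h1 (show ((t p).1, (s p).1) = 0 by rw [h1t, h1s]; rfl)
      · exact ((hcond2 p).2 ⟨h1s, hs2⟩) ht2
    · exact ((hcond2 p).1 ⟨h1t, ht2⟩) hs2


end Statement1

end ProcessPaper
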